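/- Fix an integer n ≥ 2 and set b := -n + i. Let D ⊆ {0, 1, …, ⌊n²/2⌋} satisfy |δ − δ'| ≠ 1 for all δ, δ' ∈ Δ := D − D. Let (α_j)_{j≥1} be a sequence with α_j ∈ Δ for all j, set α := π((α_j)), and let C(α) := C_{n,D} ∩ (C_{n,D} + α). Then for every k ≥ 1: (a) for every tuple (d_1, …, d_k) with d_j ∈ D ∩ (D + α_j) for each j, the k-tile T_{d_1…d_k} intersects C(α); and (b) C(α) is contained in the union of the k-tiles T_{d_1…d_k} over all tuples (d_1, …, d_k) with d_j ∈ D ∩ (D + α_j) for each j. -/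

import Mathlib

open Complex Filter Pointwise

/-- `piSum b d = ∑_{j≥1} d_j b^{-j}` (0-indexed: `d j` is the `(j+1)`-st digit). -/
noncomputable def piSum (b : ℂ) (d : ℕ → ℤ) : ℂ :=
  ∑' j : ℕ, (d j : ℂ) * b ^ (-((j : ℤ) + 1))

/-- The `n`-th fundamental tile `T_n`. -/
def fundTile (n : ℕ) : Set ℂ :=
  {z | ∃ d : ℕ → ℤ, (∀ j, 0 ≤ d j ∧ d j ≤ (n : ℤ) ^ 2) ∧
    z = piSum (-(n : ℂ) + Complex.I) d}

/-- The restricted digit set `C_{n,D}`. -/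
def restrictedDigitSet (n : ℕ) (D : Set ℤ) : Set ℂ :=
  {z | ∃ d : ℕ → ℤ, (∀ j, d j ∈ D) ∧ z = piSum (-(n : ℂ) + Complex.I) d}

/-- The `k`-tile of a set `T` with digits `d_1, …, d_k` (0-indexed). -/
def kTile (b : ℂ) (T : Set ℂ) (k : ℕ) (d : Fin k → ℤ) : Set ℂ :=
  {z | ∃ t ∈ T, z = (∑ j : Fin k, (d j : ℂ) * b ^ (-((j : ℤ) + 1))) + b ^ (-(k : ℤ)) * t}


/-! ### Auxiliary lemmas -/

private lemma key_pos' (m a d : ℤ) (hm : 2 ≤ m) (ha : a ≤ m^2)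
    (H2 : (a - m*2)^2 + 2^2 ≤ m^2 + 2*m + 2)
    (H3 : (m^2*2 - m*a - 2 + d)^2 + (a - 2*m*2)^2 ≤ m^2 + 2*m + 2)
    (H4 : (3*m^2*2 - 2*m*a - 2 + d)^2 ≤ m^2 + 2*m + 2) : False := by
  have h1 : a ≤ 3*m := by
    by_contra h
    push_neg at h
    nlinarith [sq_nonneg (a - 3*m - 1), mul_nonneg (by linarith : (0:ℤ) ≤ a - 3*m - 1) (by linarith : (0:ℤ) ≤ m + 1)]
  have h2 : 3*m - 1 ≤ a := by
    by_contra h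
    push_neg at h
    nlinarith [sq_nonneg (4*m - a - m - 2), mul_nonneg (by linarith : (0:ℤ) ≤ 4*m - a - m - 2) (by linarith : (0:ℤ) ≤ m + 2)]
  have hm3 : 3 ≤ m := by
    by_contra h
    push_neg at h
    have : m = 2 := by omega
    subst this
    omega
  have hcase : a = 3*m ∨ a = 3*m - 1 := by omega
  rcases hcase with rfl | rfl
  · have hd3 : d ≤ m + 3 := by
      by_contra h
      push_neg at h
      nlinarith [sq_nonneg (d - 2 - m - 1), mul_nonneg (by linarith : (0:ℤ) ≤ d - m - 4) (by linarith : (0:ℤ) ≤ m + 1)]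
    have hp : d - m^2 - 2 ≤ -(m+2) := by nlinarith
    nlinarith [mul_nonneg (by linarith : (0:ℤ) ≤ m^2 + 2 - d - m - 2) (by linarith : (0:ℤ) ≤ m + 2)]
  · have hd3 : d ≤ 3 - m := by
      by_contra h
      push_neg at h
      nlinarith [mul_nonneg (by linarith : (0:ℤ) ≤ 2*m - 2 + d - m - 1) (by linarith : (0:ℤ) ≤ m + 1)]
    have hp : d - m^2 + m - 2 ≤ -8 := by nlinarith
    nlinarith [mul_nonneg (by linarith : (0:ℤ) ≤ -(d - m^2 + m - 2) - 8) (by linarith : (0:ℤ) ≤ 8)]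

private lemma key_int (m s a d : ℤ) (hm : 2 ≤ m)
    (ha : |a| ≤ m^2) (hs0 : s ≠ 0) (hs1 : s ≠ 1) (hs1' : s ≠ -1)
    (H2 : (a - m*s)^2 + s^2 ≤ m^2 + 2*m + 2)
    (H3 : (m^2*s - m*a - s + d)^2 + (a - 2*m*s)^2 ≤ m^2 + 2*m + 2)
    (H4 : (3*m^2*s - 2*m*a - s + d)^2 ≤ m^2 + 2*m + 2) : False := by
  have hs2 : 2 ≤ |s| := by rcases abs_cases s with ⟨h,_⟩|⟨h,_⟩ <;> omega
  have hA : |a - m*s| ≤ m := by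
    rw [abs_le]
    constructor <;> by_contra h <;> push_neg at h
    · nlinarith [_root_.sq_abs s, abs_nonneg s, mul_nonneg (by linarith : (0:ℤ) ≤ -(a - m*s) - m - 1) (by linarith : (0:ℤ) ≤ m + 1), mul_le_mul hs2 hs2 (by omega) (by omega)]
    · nlinarith [_root_.sq_abs s, mul_nonneg (by linarith : (0:ℤ) ≤ (a - m*s) - m - 1) (by linarith : (0:ℤ) ≤ m + 1), mul_le_mul hs2 hs2 (by omega) (by omega)]
  have hB : |a - 2*m*s| ≤ m + 1 := by
    rw [abs_le]
    constructor <;> by_contra h <;> push_neg at h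
    · nlinarith [sq_nonneg (m^2*s - m*a - s + d), mul_nonneg (by linarith : (0:ℤ) ≤ -(a - 2*m*s) - m - 2) (by linarith : (0:ℤ) ≤ m + 2)]
    · nlinarith [sq_nonneg (m^2*s - m*a - s + d), mul_nonneg (by linarith : (0:ℤ) ≤ (a - 2*m*s) - m - 2) (by linarith : (0:ℤ) ≤ m + 2)]
  have hms : m * |s| ≤ 2*m + 1 := by
    have heq : m * s = (a - m*s) - (a - 2*m*s) := by ring
    have h1 : |m * s| ≤ 2*m + 1 := by
      rw [heq]
      calc |(a - m*s) - (a - 2*m*s)| ≤ |a - m*s| + |a - 2*m*s| := abs_sub _ _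
        _ ≤ 2*m + 1 := by omega
    rwa [abs_mul, abs_of_nonneg (by omega : (0:ℤ) ≤ m)] at h1
  have hsv : s = 2 ∨ s = -2 := by
    have h3 : |s| ≤ 2 := by nlinarith
    rcases abs_cases s with ⟨h,_⟩|⟨h,_⟩ <;> omega
  rcases hsv with rfl | rfl
  · exact key_pos' m a d hm (le_trans (le_abs_self a) ha) (by linarith) (by linarith) (by linarith)
  · refine key_pos' m (-a) (-d) hm (by have := neg_abs_le a; linarith) ?_ ?_ ?_
    · nlinarith [H2]
    · nlinarith [H3]
    · nlinarith [H4]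

section AuxAnalytic

variable (n : ℕ)

private lemma habs2 : (‖(-(n:ℂ) + I)‖)^2 = (n:ℝ)^2 + 1 := by
  rw [Complex.sq_norm, Complex.normSq_apply]
  simp
  ring

private lemma h1b (hn : 2 ≤ n) : 1 < ‖(-(n:ℂ) + I)‖ := by
  have h := habs2 n
  have h0 : (0:ℝ) ≤ ‖(-(n:ℂ) + I)‖ := norm_nonneg _
  have hn' : (2:ℝ) ≤ n := by exact_mod_cast hn
  nlinarith

private lemma summable_digits (hn : 2 ≤ n) (c : ℕ → ℤ) (M : ℝ) (hc : ∀ j, |(c j : ℝ)| ≤ M) :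
    Summable (fun j : ℕ => (c j : ℂ) * (-(n:ℂ) + I) ^ (-((j:ℤ)+1))) := by
  set β := ‖(-(n:ℂ) + I)‖ with hβ
  have hβ1 : 1 < β := h1b n hn
  have hr0 : (0:ℝ) ≤ β⁻¹ := by positivity
  have hr1 : β⁻¹ < 1 := inv_lt_one_of_one_lt₀ hβ1
  have hgeo : Summable (fun j : ℕ => M * (β⁻¹ ^ (j+1))) := by
    have := (summable_geometric_of_lt_one hr0 hr1).mul_left (M * β⁻¹)
    refine this.congr fun j => ?_
    ring
  refine Summable.of_norm_bounded hgeo fun j => ?_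
  have hnorm : ‖(-(n:ℂ) + I) ^ (-((j:ℤ)+1))‖ = β⁻¹ ^ (j+1) := by
    rw [norm_zpow, ← hβ]
    rw [show (-((j:ℤ)+1)) = -((j+1 : ℕ) : ℤ) by push_cast; ring]
    rw [zpow_neg, zpow_natCast, inv_pow]
  rw [norm_mul, hnorm]
  have hcj : ‖((c j : ℤ) : ℂ)‖ = |(c j : ℝ)| := by
    rw [show ((c j : ℤ) : ℂ) = ((c j : ℝ) : ℂ) by push_cast; rfl, Complex.norm_real]
    rfl
  rw [hcj]
  exact mul_le_mul_of_nonneg_right (hc j) (by positivity)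

private lemma tail_bound (hn : 2 ≤ n) (c : ℕ → ℤ) (hc : ∀ j, |(c j : ℝ)| ≤ (n:ℝ)^2) :
    ‖∑' j : ℕ, (c j : ℂ) * (-(n:ℂ) + I) ^ (-((j:ℤ)+1))‖ ≤ ‖(-(n:ℂ) + I)‖ + 1 := by
  set β := ‖(-(n:ℂ) + I)‖ with hβ
  have hβ1 : 1 < β := h1b n hn
  have hβ2 : β^2 = (n:ℝ)^2 + 1 := habs2 n
  have hr0 : (0:ℝ) ≤ β⁻¹ := by positivity
  have hr1 : β⁻¹ < 1 := inv_lt_one_of_one_lt₀ hβ1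
  have hgeo : Summable (fun j : ℕ => (n:ℝ)^2 * (β⁻¹ ^ (j+1))) := by
    have := (summable_geometric_of_lt_one hr0 hr1).mul_left ((n:ℝ)^2 * β⁻¹)
    refine this.congr fun j => ?_
    ring
  have hbd : ∀ j : ℕ, ‖(c j : ℂ) * (-(n:ℂ) + I) ^ (-((j:ℤ)+1))‖ ≤ (n:ℝ)^2 * (β⁻¹ ^ (j+1)) := by
    intro j
    have hnorm : ‖(-(n:ℂ) + I) ^ (-((j:ℤ)+1))‖ = β⁻¹ ^ (j+1) := by
      rw [norm_zpow, ← hβ]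
      rw [show (-((j:ℤ)+1)) = -((j+1 : ℕ) : ℤ) by push_cast; ring]
      rw [zpow_neg, zpow_natCast, inv_pow]
    rw [norm_mul, hnorm]
    have hcj : ‖((c j : ℤ) : ℂ)‖ = |(c j : ℝ)| := by
      rw [show ((c j : ℤ) : ℂ) = ((c j : ℝ) : ℂ) by push_cast; rfl, Complex.norm_real]
      rfl
    rw [hcj]
    exact mul_le_mul_of_nonneg_right (hc j) (by positivity)
  have hsumnorm : Summable (fun j : ℕ => ‖(c j : ℂ) * (-(n:ℂ) + I) ^ (-((j:ℤ)+1))‖) :=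
    Summable.of_nonneg_of_le (fun _ => norm_nonneg _) hbd hgeo
  calc ‖∑' j : ℕ, (c j : ℂ) * (-(n:ℂ) + I) ^ (-((j:ℤ)+1))‖
      ≤ ∑' j : ℕ, ‖(c j : ℂ) * (-(n:ℂ) + I) ^ (-((j:ℤ)+1))‖ := norm_tsum_le_tsum_norm hsumnorm
    _ ≤ ∑' j : ℕ, (n:ℝ)^2 * (β⁻¹ ^ (j+1)) := Summable.tsum_le_tsum hbd hsumnorm hgeo
    _ = (n:ℝ)^2 * β⁻¹ * (1 - β⁻¹)⁻¹ := by
        rw [show (fun j : ℕ => (n:ℝ)^2 * (β⁻¹ ^ (j+1))) = fun j : ℕ => ((n:ℝ)^2 * β⁻¹) * β⁻¹ ^ j by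
          funext j; ring]
        rw [tsum_mul_left, tsum_geometric_of_lt_one hr0 hr1]
    _ = β + 1 := by
        have hβ0 : β ≠ 0 := by positivity
        have h1r : 1 - β⁻¹ ≠ 0 := by
          intro h
          have : β⁻¹ = 1 := by linarith
          rw [this] at hr1; linarith
        field_simp
        rw [div_eq_iff (sub_ne_zero.mpr (ne_of_gt hβ1))]
        linear_combination -hβ2

private lemma ball_int (hn : 2 ≤ n) (z : ℂ) (P Q : ℤ) (hre : z.re = (P:ℝ)) (him : z.im = (Q:ℝ))
    (hz : ‖z‖ ≤ ‖(-(n:ℂ) + I)‖ + 1) : P^2 + Q^2 ≤ (n:ℤ)^2 + 2*n + 2 := by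
  set β := ‖(-(n:ℂ) + I)‖ with hβ
  have hβ1 : 1 < β := h1b n hn
  have hβ2 : β^2 = (n:ℝ)^2 + 1 := habs2 n
  have hn' : (2:ℝ) ≤ n := by exact_mod_cast hn
  have h2β : 2*β < 2*(n:ℝ) + 1 := by nlinarith
  have habs : ‖z‖ ^ 2 = (P:ℝ)^2 + (Q:ℝ)^2 := by
    rw [Complex.sq_norm, Complex.normSq_apply, hre, him]; ring
  have h1 : ‖z‖ ≤ β + 1 := hz
  have h0 : (0:ℝ) ≤ ‖z‖ := norm_nonneg _
  have h2 : (P:ℝ)^2 + (Q:ℝ)^2 < (n:ℝ)^2 + 2*n + 3 := by nlinarith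
  have h3 : ((P^2 + Q^2 : ℤ):ℝ) < (((n:ℤ)^2 + 2*n + 3 : ℤ):ℝ) := by push_cast; push_cast at h2; linarith
  have h4 : P^2 + Q^2 < (n:ℤ)^2 + 2*n + 3 := by exact_mod_cast h3
  omega

private lemma digits_zero (hn : 2 ≤ n) (c : ℕ → ℤ) (hbd : ∀ j, |c j| ≤ (n:ℤ)^2)
    (hne : ∀ j, c j ≠ 1 ∧ c j ≠ -1)
    (hsum : ∑' j : ℕ, (c j : ℂ) * (-(n:ℂ) + I) ^ (-((j:ℤ)+1)) = 0) :
    ∀ j, c j = 0 := by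
  set b : ℂ := -(n:ℂ) + I with hb
  have hβ1 : 1 < ‖b‖ := h1b n hn
  have hb0 : b ≠ 0 := by
    intro h
    rw [h] at hβ1; simp at hβ1; linarith
  have hbdR : ∀ (N : ℕ), ∀ j, |((c (j+N) : ℤ) : ℝ)| ≤ (n:ℝ)^2 := by
    intro N j
    have := hbd (j+N)
    rw [show ((n:ℝ)^2) = (((n:ℤ)^2 : ℤ) : ℝ) by push_cast; ring]
    exact_mod_cast this
  set T : ℕ → ℂ := fun N => ∑' m : ℕ, (c (m+N) : ℂ) * b ^ (-((m:ℤ)+1)) with hT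
  have hTsummable : ∀ N : ℕ, Summable (fun m : ℕ => (c (m+N) : ℂ) * b ^ (-((m:ℤ)+1))) :=
    fun N => summable_digits n hn (fun m => c (m+N)) ((n:ℝ)^2) (hbdR N)
  have hTbound : ∀ N, ‖T N‖ ≤ ‖b‖ + 1 :=
    fun N => tail_bound n hn (fun m => c (m+N)) (hbdR N)
  have hT0 : T 0 = 0 := by
    rw [hT]
    simpa using hsum
  have hrec : ∀ N, T (N+1) = b * T N - c N := by
    intro N
    have h2 : (∑' m : ℕ, ((c (m+1+N) : ℂ) * b ^ (-(((m+1:ℕ):ℤ) + 1)))) = b⁻¹ * T (N+1) := by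
      rw [hT]
      rw [← tsum_mul_left]
      apply tsum_congr
      intro m
      rw [show m+1+N = m+(N+1) from by omega]
      rw [show (-(((m+1:ℕ):ℤ)+1)) = (-1) + (-((m:ℤ)+1)) from by push_cast; ring]
      rw [zpow_add₀ hb0, zpow_neg_one]
      ring
    have h0' := Summable.tsum_eq_zero_add (hTsummable N)
    rw [h2] at h0'
    rw [show ((0:ℕ)+N) = N from Nat.zero_add N] at h0'
    have h0'' : T N = (c N : ℂ) * b⁻¹ + b⁻¹ * T (N+1) := by
      rw [hT] at h0' ⊢
      convert h0' using 3
      norm_num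
    field_simp at h0''
    linear_combination -h0''
  by_contra hcon
  push_neg at hcon
  obtain ⟨j₁, hj₁⟩ := hcon
  have hex : ∃ j, c j ≠ 0 := ⟨j₁, hj₁⟩
  set j₀ := Nat.find hex with hj₀def
  have hj₀ : c j₀ ≠ 0 := Nat.find_spec hex
  have hmin : ∀ j < j₀, c j = 0 := fun j hj => by
    by_contra h
    exact Nat.find_min hex hj h
  have hTzero : ∀ j ≤ j₀, T j = 0 := by
    intro j hj
    induction j with
    | zero => exact hT0
    | succ i ih =>
      rw [hrec i, ih (by omega), hmin i (by omega)]
      simp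
  set s : ℤ := c j₀ with hs
  set a : ℤ := c (j₀+1) with ha
  set d : ℤ := c (j₀+2) with hd
  have hT1 : T (j₀+1) = -(s : ℂ) := by
    rw [hrec j₀, hTzero j₀ le_rfl]
    simp [hs]
  have hT2 : T (j₀+2) = -(b * (s:ℂ) + (a:ℂ)) := by
    rw [hrec (j₀+1), hT1]
    ring
  have hT3 : T (j₀+3) = -(b * (b * (s:ℂ) + (a:ℂ)) + (d:ℂ)) := by
    rw [show j₀+3 = (j₀+2)+1 from rfl, hrec (j₀+2), hT2]
    ring
  have hT4 : T (j₀+4) = -(b * (b * (b * (s:ℂ) + (a:ℂ)) + (d:ℂ)) + (c (j₀+3) : ℂ)) := by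
    rw [show j₀+4 = (j₀+3)+1 from rfl, hrec (j₀+3), hT3]
    ring
  have hn2 : ‖b * (s:ℂ) + (a:ℂ)‖ ≤ ‖b‖ + 1 := by
    have := hTbound (j₀+2)
    rw [hT2, norm_neg] at this
    exact this
  have hn3 : ‖b * (b * (s:ℂ) + (a:ℂ)) + (d:ℂ)‖ ≤ ‖b‖ + 1 := by
    have := hTbound (j₀+3)
    rw [hT3, norm_neg] at this
    exact this
  have hn4 : ‖b * (b * (b * (s:ℂ) + (a:ℂ)) + (d:ℂ)) + (c (j₀+3) : ℂ)‖ ≤ ‖b‖ + 1 := by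
    have := hTbound (j₀+4)
    rw [hT4, norm_neg] at this
    exact this
  have hre2 : (b * (s:ℂ) + (a:ℂ)).re = ((a - (n:ℤ)*s : ℤ) : ℝ) := by
    rw [hb]; push_cast; simp [Complex.add_re, Complex.mul_re]; ring
  have him2 : (b * (s:ℂ) + (a:ℂ)).im = ((s : ℤ) : ℝ) := by
    rw [hb]; simp [Complex.add_im, Complex.mul_im]
  have hre3 : (b * (b * (s:ℂ) + (a:ℂ)) + (d:ℂ)).re = (((n:ℤ)^2*s - (n:ℤ)*a - s + d : ℤ) : ℝ) := by
    rw [hb]; push_cast; simp [Complex.add_re, Complex.mul_re, Complex.add_im, Complex.mul_im]; ring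
  have him3 : (b * (b * (s:ℂ) + (a:ℂ)) + (d:ℂ)).im = ((a - 2*(n:ℤ)*s : ℤ) : ℝ) := by
    rw [hb]; push_cast; simp [Complex.add_re, Complex.mul_re, Complex.add_im, Complex.mul_im]; ring
  have him4 : (b * (b * (b * (s:ℂ) + (a:ℂ)) + (d:ℂ)) + (c (j₀+3) : ℂ)).im
      = ((3*(n:ℤ)^2*s - 2*(n:ℤ)*a - s + d : ℤ) : ℝ) := by
    rw [hb]; push_cast; simp [Complex.add_re, Complex.mul_re, Complex.add_im, Complex.mul_im]; ring
  have hre4 : (b * (b * (b * (s:ℂ) + (a:ℂ)) + (d:ℂ)) + (c (j₀+3) : ℂ)).re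
      = ((-((n:ℤ)*((n:ℤ)^2*s - (n:ℤ)*a - s + d)) - (a - 2*(n:ℤ)*s) + c (j₀+3) : ℤ) : ℝ) := by
    rw [hb]; push_cast; simp [Complex.add_re, Complex.mul_re, Complex.add_im, Complex.mul_im]; ring
  have H2 := ball_int n hn _ _ _ hre2 him2 hn2
  have H3 := ball_int n hn _ _ _ hre3 him3 hn3
  have H4' := ball_int n hn _ _ _ hre4 him4 hn4
  have H4 : (3*(n:ℤ)^2*s - 2*(n:ℤ)*a - s + d)^2 ≤ (n:ℤ)^2 + 2*(n:ℤ) + 2 := by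
    nlinarith [sq_nonneg (-((n:ℤ)*((n:ℤ)^2*s - (n:ℤ)*a - s + d)) - (a - 2*(n:ℤ)*s) + c (j₀+3))]
  have hmge : (2:ℤ) ≤ (n:ℤ) := by exact_mod_cast hn
  exact key_int (n:ℤ) s a d hmge (hbd (j₀+1)) hj₀ (hne j₀).1 (hne j₀).2
    (by linarith [H2]) (by linarith [H3]) H4

private lemma piSum_def (b : ℂ) (c : ℕ → ℤ) :
    piSum b c = ∑' j : ℕ, (c j : ℂ) * b ^ (-((j:ℤ)+1)) := rfl

private lemma piSum_add (hn : 2 ≤ n) (c₁ c₂ : ℕ → ℤ) (M₁ M₂ : ℝ)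
    (h₁ : ∀ j, |(c₁ j : ℝ)| ≤ M₁) (h₂ : ∀ j, |(c₂ j : ℝ)| ≤ M₂) :
    piSum (-(n:ℂ) + I) (fun j => c₁ j + c₂ j)
      = piSum (-(n:ℂ) + I) c₁ + piSum (-(n:ℂ) + I) c₂ := by
  rw [piSum_def, piSum_def, piSum_def, ← Summable.tsum_add (summable_digits n hn c₁ M₁ h₁)
    (summable_digits n hn c₂ M₂ h₂)]
  apply tsum_congr
  intro j
  push_cast
  ring

private lemma piSum_split (hn : 2 ≤ n) (c : ℕ → ℤ) (M : ℝ) (hc : ∀ j, |(c j : ℝ)| ≤ M) (k : ℕ) :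
    piSum (-(n:ℂ) + I) c
      = (∑ j ∈ Finset.range k, (c j : ℂ) * (-(n:ℂ) + I) ^ (-((j:ℤ)+1)))
        + (-(n:ℂ) + I) ^ (-(k:ℤ)) * piSum (-(n:ℂ) + I) (fun m => c (m+k)) := by
  have hb0 : (-(n:ℂ) + I) ≠ 0 := by
    intro h
    have := h1b n hn
    rw [h] at this; simp at this; linarith
  have hsumm := summable_digits n hn c M hc
  have hsplit := Summable.sum_add_tsum_nat_add k hsumm
  rw [piSum_def, ← hsplit]
  congr 1
  rw [piSum_def, ← tsum_mul_left]
  apply tsum_congr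
  intro m
  rw [show (-(((m+k:ℕ):ℤ) + 1)) = (-(k:ℤ)) + (-((m:ℤ)+1)) from by push_cast; ring]
  rw [zpow_add₀ hb0]
  ring

end AuxAnalytic

theorem stmt_7 (n : ℕ) (hn : 2 ≤ n) (D : Set ℤ)
    (hD : D ⊆ Set.Icc 0 ((n : ℤ) ^ 2 / 2))
    (hsep : ∀ δ ∈ D - D, ∀ δ' ∈ D - D, |δ - δ'| ≠ 1)
    (α : ℕ → ℤ) (hα : ∀ j, α j ∈ D - D)
    (Cα : Set ℂ)
    (hCα : Cα = restrictedDigitSet n D ∩ (restrictedDigitSet n D + {piSum (-(n : ℂ) + Complex.I) α}))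
    (k : ℕ) (hk : 1 ≤ k) :
    (∀ d : Fin k → ℤ, (∀ j : Fin k, d j ∈ D ∩ (D + {α (j : ℕ)})) →
        (kTile (-(n : ℂ) + Complex.I) (fundTile n) k d ∩ Cα).Nonempty) ∧
      Cα ⊆ ⋃ d : Fin k → ℤ, ⋃ (_ : ∀ j : Fin k, d j ∈ D ∩ (D + {α (j : ℕ)})),
        kTile (-(n : ℂ) + Complex.I) (fundTile n) k d := by
  classical
  obtain ⟨M2, hM2⟩ : ∃ M2 : ℤ, M2 = (n:ℤ)^2 := ⟨_, rfl⟩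
  have hDb : ∀ x ∈ D, 0 ≤ x ∧ x ≤ M2/2 := by
    intro x hx
    have := hD hx
    rw [Set.mem_Icc, ← hM2] at this
    exact this
  have hcast : ∀ c : ℤ, |c| ≤ M2 → |(c:ℝ)| ≤ (n:ℝ)^2 := by
    intro c h
    have h' : |c| ≤ (n:ℤ)^2 := by rw [← hM2]; exact h
    calc |(c:ℝ)| = ((|c| : ℤ) : ℝ) := by push_cast; rfl
      _ ≤ (((n:ℤ)^2 : ℤ) : ℝ) := by exact_mod_cast h'
      _ = (n:ℝ)^2 := by push_cast; ring
  have halpha : ∀ j, -(M2/2) ≤ α j ∧ α j ≤ M2/2 := by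
    intro j
    obtain ⟨p, hp, q, hq, hpq⟩ := Set.mem_sub.1 (hα j)
    have h1 := hDb p hp
    have h2 := hDb q hq
    omega
  have hM2nn : 0 ≤ M2 := by rw [hM2]; positivity
  -- membership of piSum in the k-tile of its own first k digits
  have hsplitmem : ∀ e : ℕ → ℤ, (∀ j, e j ∈ D) →
      piSum (-(n:ℂ) + Complex.I) e
        ∈ kTile (-(n:ℂ) + Complex.I) (fundTile n) k (fun j : Fin k => e (j:ℕ)) := by
    intro e heD
    have hbound : ∀ j, |(e j : ℝ)| ≤ (n:ℝ)^2 := by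
      intro j
      refine hcast _ ?_
      have := hDb _ (heD j)
      rw [abs_le]
      omega
    refine ⟨piSum (-(n:ℂ) + Complex.I) (fun m => e (m+k)), ?_, ?_⟩
    · refine ⟨fun m => e (m+k), fun m => ?_, rfl⟩
      have := hDb _ (heD (m+k))
      show 0 ≤ e (m+k) ∧ e (m+k) ≤ (n:ℤ)^2
      rw [← hM2]
      omega
    · rw [piSum_split n hn e ((n:ℝ)^2) hbound k]
      congr 1
      exact (Fin.sum_univ_eq_sum_range (fun j => (e j : ℂ) * (-(n:ℂ) + Complex.I) ^ (-((j:ℤ)+1))) k).symm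
  constructor
  · -- (a)
    intro d hd
    have hdj : ∀ j : Fin k, d j ∈ D ∧ d j - α (j:ℕ) ∈ D := by
      intro j
      obtain ⟨h1, h2⟩ := hd j
      obtain ⟨x, hx, y, hy, hxy⟩ := Set.mem_add.1 h2
      rw [Set.mem_singleton_iff] at hy
      subst hy
      exact ⟨h1, by rw [show d j - α (j:ℕ) = x from by omega]; exact hx⟩
    have hchoice : ∀ j, ∃ x, x ∈ D ∧ x - α j ∈ D := by
      intro j
      obtain ⟨p, hp, q, hq, hpq⟩ := Set.mem_sub.1 (hα j)
      exact ⟨p, hp, by rw [show p - α j = q from by omega]; exact hq⟩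
    choose w hw1 hw2 using hchoice
    set e : ℕ → ℤ := fun j => if h : j < k then d ⟨j, h⟩ else w j with he
    have he1 : ∀ j, e j ∈ D := by
      intro j
      rw [he]
      dsimp only
      split
      · exact (hdj ⟨j, by assumption⟩).1
      · exact hw1 j
    have he2 : ∀ j, e j - α j ∈ D := by
      intro j
      rw [he]
      dsimp only
      split
      · exact (hdj ⟨j, by assumption⟩).2
      · exact hw2 j
    have heD : ∀ j : Fin k, e (j:ℕ) = d j := by
      intro j
      rw [he]
      dsimp only
      rw [dif_pos j.isLt]
    refine ⟨piSum (-(n:ℂ) + Complex.I) e, ?_, ?_⟩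
    · have hde : (fun j : Fin k => e (j:ℕ)) = d := funext fun j => heD j
      rw [← hde]
      exact hsplitmem e he1
    · rw [hCα]
      constructor
      · exact ⟨e, he1, rfl⟩
      · have hb1 : ∀ j, |((e j - α j : ℤ) : ℝ)| ≤ (n:ℝ)^2 := by
          intro j
          refine hcast _ ?_
          have := hDb _ (he2 j)
          rw [abs_le]
          omega
        have hb2 : ∀ j, |((α j : ℤ) : ℝ)| ≤ (n:ℝ)^2 := by
          intro j
          refine hcast _ ?_
          have := halpha j
          rw [abs_le]
          omega
        have hadd := piSum_add n hn (fun j => e j - α j) α ((n:ℝ)^2) ((n:ℝ)^2) hb1 hb2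
        rw [show (fun j => (e j - α j) + α j) = e from funext fun j => by ring] at hadd
        exact Set.mem_add.2 ⟨piSum (-(n:ℂ) + Complex.I) (fun j => e j - α j),
          ⟨fun j => e j - α j, he2, rfl⟩, piSum (-(n:ℂ) + Complex.I) α,
          Set.mem_singleton _, hadd.symm⟩
  · -- (b)
    intro z hz
    rw [hCα] at hz
    obtain ⟨⟨e, heD', hze⟩, hz2⟩ := hz
    obtain ⟨y, hy, w', hw', hsum'⟩ := Set.mem_add.1 hz2
    rw [Set.mem_singleton_iff] at hw'
    subst hw'
    obtain ⟨f, hf, hyf⟩ := hy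
    subst hyf
    subst hze
    -- hsum' : piSum f + piSum α = piSum e
    have hbE : ∀ j, |((e j : ℤ) : ℝ)| ≤ (n:ℝ)^2 := by
      intro j
      refine hcast _ ?_
      have := hDb _ (heD' j)
      rw [abs_le]
      omega
    have hbF : ∀ j, |((f j : ℤ) : ℝ)| ≤ (n:ℝ)^2 := by
      intro j
      refine hcast _ ?_
      have := hDb _ (hf j)
      rw [abs_le]
      omega
    have hbA : ∀ j, |((α j : ℤ) : ℝ)| ≤ (n:ℝ)^2 := by
      intro j
      refine hcast _ ?_
      have := halpha j
      rw [abs_le]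
      omega
    have hsE := summable_digits n hn e ((n:ℝ)^2) hbE
    have hsF := summable_digits n hn f ((n:ℝ)^2) hbF
    have hsA := summable_digits n hn α ((n:ℝ)^2) hbA
    have htsum0 : ∑' j : ℕ, ((e j - f j - α j : ℤ) : ℂ) * (-(n:ℂ) + Complex.I) ^ (-((j:ℤ)+1)) = 0 := by
      rw [show (fun j : ℕ => ((e j - f j - α j : ℤ) : ℂ) * (-(n:ℂ) + Complex.I) ^ (-((j:ℤ)+1)))
          = fun j : ℕ => ((e j : ℂ) * (-(n:ℂ) + Complex.I) ^ (-((j:ℤ)+1))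
              - (f j : ℂ) * (-(n:ℂ) + Complex.I) ^ (-((j:ℤ)+1)))
              - (α j : ℂ) * (-(n:ℂ) + Complex.I) ^ (-((j:ℤ)+1)) from
        funext fun j => by push_cast; ring]
      rw [Summable.tsum_sub (hsE.sub hsF) hsA, Summable.tsum_sub hsE hsF]
      rw [piSum_def, piSum_def, piSum_def] at hsum'
      rw [← hsum']
      ring
    have hcb : ∀ j, |e j - f j - α j| ≤ (n:ℤ)^2 := by
      intro j
      have h1 := hDb _ (heD' j)
      have h2 := hDb _ (hf j)
      have h3 := halpha j
      rw [← hM2, abs_le]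
      omega
    have hcne : ∀ j, e j - f j - α j ≠ 1 ∧ e j - f j - α j ≠ -1 := by
      intro j
      have hin1 : e j - f j ∈ D - D := Set.mem_sub.2 ⟨e j, heD' j, f j, hf j, rfl⟩
      have hsep' := hsep _ hin1 _ (hα j)
      constructor <;> intro h <;> apply hsep'
      · rw [show e j - f j - α j = (1:ℤ) from h]
        norm_num
      · rw [show e j - f j - α j = (-1:ℤ) from h]
        norm_num
    have hzero := digits_zero n hn (fun j => e j - f j - α j) hcb hcne htsum0
    refine Set.mem_iUnion.2 ⟨fun j : Fin k => e (j:ℕ), Set.mem_iUnion.2 ⟨?_, ?_⟩⟩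
    · intro j
      refine ⟨heD' (j:ℕ), Set.mem_add.2 ⟨f (j:ℕ), hf _, α (j:ℕ), Set.mem_singleton _, ?_⟩⟩
      have h0 : e (j:ℕ) - f (j:ℕ) - α (j:ℕ) = 0 := hzero (j:ℕ)
      show f (j:ℕ) + α (j:ℕ) = e (j:ℕ)
      omega
    · exact hsplitmem e heD'
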